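/- For R-modules M and M', the free divided power algebra of a direct sum decomposes as Γ(M ⊕ M') ≅ Γ(M) ⊗_R Γ(M') as graded R-algebras; in particular Γ^n(M ⊕ M') ≅ ⊕_{i+j=n} Γ^i(M) ⊗_R Γ^j(M'). -/

import Mathlib

set_option maxHeartbeats 1000000
set_option synthInstance.maxHeartbeats 400000


open TensorProduct

universe u

/-- The relations defining the free divided power algebra on `M`: the generator
`X (m, n)` stands for `γ_n(m)`. -/
inductive DPRel (R : Type u) [CommRing R] (M : Type u) [AddCommGroup M] [Module R M] :
    MvPolynomial (M × ℕ) R → Prop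
  | zero (m : M) : DPRel R M (MvPolynomial.X (m, 0) - 1)
  | smul (r : R) (m : M) (n : ℕ) :
      DPRel R M (MvPolynomial.X (r • m, n) - MvPolynomial.C (r ^ n) * MvPolynomial.X (m, n))
  | add (m m' : M) (n : ℕ) :
      DPRel R M (MvPolynomial.X (m + m', n) -
        ∑ ij ∈ Finset.HasAntidiagonal.antidiagonal n, MvPolynomial.X (m, ij.1) * MvPolynomial.X (m', ij.2))
  | mul (m : M) (i j : ℕ) :
      DPRel R M (MvPolynomial.X (m, i) * MvPolynomial.X (m, j) -
        ((i + j).choose i : MvPolynomial (M × ℕ) R) * MvPolynomial.X (m, i + j))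

/-- The free divided power algebra `Γ(M)` on the `R`-module `M`. -/
def DPA (R : Type u) [CommRing R] (M : Type u) [AddCommGroup M] [Module R M] : Type u :=
  MvPolynomial (M × ℕ) R ⧸ Ideal.span {p | DPRel R M p}

variable (R : Type u) [CommRing R] (M : Type u) [AddCommGroup M] [Module R M]

noncomputable instance : CommRing (DPA R M) := Ideal.Quotient.commRing _
noncomputable instance : Algebra R (DPA R M) := Ideal.Quotient.algebra R

/-- The divided power `γ_n(m) ∈ Γ(M)`. -/
noncomputable def dpGamma (n : ℕ) (m : M) : DPA R M :=
  Ideal.Quotient.mk (Ideal.span {p | DPRel R M p}) (MvPolynomial.X (m, n))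

/-- The degree `n` piece `Γⁿ(M)` of `Γ(M)`: the span of products `∏ γ_{n_i}(m_i)`
with `∑ n_i = n`. -/
noncomputable def GammaPow (n : ℕ) : Submodule R (DPA R M) :=
  Submodule.span R {x | ∃ (k : ℕ) (ms : Fin k → M) (ns : Fin k → ℕ),
    (∑ i, ns i) = n ∧ x = ∏ i, dpGamma R M (ns i) (ms i)}

lemma dpGamma_mem (n : ℕ) (m : M) : dpGamma R M n m ∈ GammaPow R M n :=
  Submodule.subset_span ⟨1, fun _ => m, fun _ => n, by simp, by simp⟩

/-! ### Auxiliary lemmas -/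

section Aux

lemma dpa_rel_eq {p q : MvPolynomial (M × ℕ) R} (h : DPRel R M (p - q)) :
    Ideal.Quotient.mk (Ideal.span {p | DPRel R M p}) p =
      Ideal.Quotient.mk (Ideal.span {p | DPRel R M p}) q := by
  rw [← sub_eq_zero, ← map_sub, Ideal.Quotient.eq_zero_iff_mem]
  exact Ideal.subset_span h

lemma dpGamma_zero (m : M) : dpGamma R M 0 m = 1 := by
  exact dpa_rel_eq R M (DPRel.zero m)

lemma dpGamma_smul (r : R) (m : M) (n : ℕ) :
    dpGamma R M n (r • m) = r ^ n • dpGamma R M n m := by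
  have := dpa_rel_eq R M (DPRel.smul r m n)
  rw [dpGamma, this, map_mul]
  exact (Algebra.smul_def (r ^ n) (dpGamma R M n m)).symm

lemma dpGamma_add (m m' : M) (n : ℕ) :
    dpGamma R M n (m + m') =
      ∑ ij ∈ Finset.HasAntidiagonal.antidiagonal n, dpGamma R M ij.1 m * dpGamma R M ij.2 m' := by
  have := dpa_rel_eq R M (DPRel.add m m' n)
  rw [dpGamma, this, map_sum]
  simp [dpGamma]
  rfl

lemma dpGamma_mul (m : M) (i j : ℕ) :
    dpGamma R M i m * dpGamma R M j m =
      ((i + j).choose i : DPA R M) * dpGamma R M (i + j) m := by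
  have h := dpa_rel_eq R M (DPRel.mul m i j)
  calc dpGamma R M i m * dpGamma R M j m
      = (id (Ideal.Quotient.mk _ (MvPolynomial.X (m, i) * MvPolynomial.X (m, j))) : DPA R M) :=
        (map_mul _ _ _).symm
    _ = (id (Ideal.Quotient.mk _
          (((i + j).choose i : MvPolynomial (M × ℕ) R) * MvPolynomial.X (m, i + j))) : DPA R M) := h
    _ = ((i + j).choose i : DPA R M) * dpGamma R M (i + j) m := by
        rw [map_mul, map_natCast]; rfl

lemma dpGamma_zero_arg (n : ℕ) (hn : n ≠ 0) : dpGamma R M n (0 : M) = 0 := by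
  have : dpGamma R M n ((0 : R) • (0 : M)) = (0 : R) ^ n • dpGamma R M n (0 : M) :=
    dpGamma_smul R M 0 0 n
  rw [zero_smul, zero_pow hn, zero_smul] at this
  exact this

variable {S : Type u} [CommRing S] [Algebra R S]

/-- The universal property of the free divided power algebra. -/
noncomputable def dpaLift (g : M → ℕ → S)
    (h0 : ∀ m, g m 0 = 1)
    (hs : ∀ (r : R) (m : M) (n : ℕ), g (r • m) n = r ^ n • g m n)
    (ha : ∀ (m m' : M) (n : ℕ),
      g (m + m') n = ∑ ij ∈ Finset.HasAntidiagonal.antidiagonal n, g m ij.1 * g m' ij.2)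
    (hm : ∀ (m : M) (i j : ℕ), g m i * g m j = ((i + j).choose i : S) * g m (i + j)) :
    DPA R M →ₐ[R] S :=
  Ideal.Quotient.liftₐ _ (MvPolynomial.aeval fun p => g p.1 p.2) (by
    intro a haa
    have hle : Ideal.span {p | DPRel R M p} ≤
        RingHom.ker (MvPolynomial.aeval (R := R) fun p : M × ℕ => g p.1 p.2) := by
      rw [Ideal.span_le]
      rintro p hp
      simp only [SetLike.mem_coe, RingHom.mem_ker]
      induction hp with
      | zero m => simp [h0]
      | smul r m n => simp [hs, Algebra.smul_def]
      | add m m' n => simp [ha]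
      | mul m i j => simp [hm]
    exact hle haa)

lemma dpaLift_gamma (g : M → ℕ → S) (h0) (hs) (ha) (hm) (n : ℕ) (m : M) :
    dpaLift R M g h0 hs ha hm (dpGamma R M n m) = g m n := by
  have h : dpaLift R M g h0 hs ha hm (dpGamma R M n m) =
      (MvPolynomial.aeval fun p : M × ℕ => g p.1 p.2) (MvPolynomial.X (m, n)) := rfl
  rw [h, MvPolynomial.aeval_X]

lemma dpa_algHom_ext {f g : DPA R M →ₐ[R] S}
    (h : ∀ (n : ℕ) (m : M), f (dpGamma R M n m) = g (dpGamma R M n m)) : f = g := by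
  refine Ideal.Quotient.algHom_ext _ (MvPolynomial.algHom_ext fun p => ?_)
  exact h p.2 p.1

end Aux

section Map

variable (N : Type u) [AddCommGroup N] [Module R N]

/-- Functoriality of `DPA`. -/
noncomputable def dpaMap (f : M →ₗ[R] N) : DPA R M →ₐ[R] DPA R N :=
  dpaLift R M (fun m n => dpGamma R N n (f m))
    (fun m => dpGamma_zero R N (f m))
    (fun r m n => by simp only [map_smul]; rw [dpGamma_smul])
    (fun m m' n => by simp only [map_add]; rw [dpGamma_add])
    (fun m i j => dpGamma_mul R N (f m) i j)

lemma dpaMap_gamma (f : M →ₗ[R] N) (n : ℕ) (m : M) :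
    dpaMap R M N f (dpGamma R M n m) = dpGamma R N n (f m) :=
  dpaLift_gamma _ _ _ _ _ _ _ _ _

end Map

section Conv

/-- Convolution of two "divided-power" sequences is a divided-power sequence
(an incarnation of Vandermonde's identity). -/
lemma conv_choose {T : Type*} [CommSemiring T] {u v : ℕ → T}
    (hu : ∀ i j, u i * u j = ((i + j).choose i : T) * u (i + j))
    (hv : ∀ i j, v i * v j = ((i + j).choose i : T) * v (i + j)) (i j : ℕ) :
    (∑ ab ∈ Finset.HasAntidiagonal.antidiagonal i, u ab.1 * v ab.2) *
      (∑ cd ∈ Finset.HasAntidiagonal.antidiagonal j, u cd.1 * v cd.2) =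
    ((i + j).choose i : T) *
      ∑ ef ∈ Finset.HasAntidiagonal.antidiagonal (i + j), u ef.1 * v ef.2 := by
  classical
  have lhs : (∑ ab ∈ Finset.HasAntidiagonal.antidiagonal i, u ab.1 * v ab.2) *
      (∑ cd ∈ Finset.HasAntidiagonal.antidiagonal j, u cd.1 * v cd.2) =
      ∑ p ∈ Finset.HasAntidiagonal.antidiagonal i ×ˢ Finset.HasAntidiagonal.antidiagonal j,
        (((p.1.1 + p.2.1).choose p.1.1 * (p.1.2 + p.2.2).choose p.1.2 : ℕ) : T) *
          (u (p.1.1 + p.2.1) * v (p.1.2 + p.2.2)) := by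
    rw [Finset.sum_mul_sum, Finset.sum_product]
    refine Finset.sum_congr rfl fun ab _ => Finset.sum_congr rfl fun cd _ => ?_
    have : u ab.1 * v ab.2 * (u cd.1 * v cd.2) =
        (u ab.1 * u cd.1) * (v ab.2 * v cd.2) := by ring
    rw [this, hu, hv, Nat.cast_mul]
    ring
  have rhs : ((i + j).choose i : T) *
      ∑ ef ∈ Finset.HasAntidiagonal.antidiagonal (i + j), u ef.1 * v ef.2 =
      ∑ q ∈ Finset.HasAntidiagonal.antidiagonal (i + j) ×ˢ Finset.HasAntidiagonal.antidiagonal i,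
        ((q.1.1.choose q.2.1 * q.1.2.choose q.2.2 : ℕ) : T) * (u q.1.1 * v q.1.2) := by
    rw [Finset.mul_sum, Finset.sum_product]
    refine Finset.sum_congr rfl fun ef hef => ?_
    have hef' : ef.1 + ef.2 = i + j := Finset.HasAntidiagonal.mem_antidiagonal.mp hef
    rw [← hef', Nat.add_choose_eq, Nat.cast_sum, Finset.sum_mul]
  rw [lhs, rhs]
  have key : ∑ p ∈ Finset.HasAntidiagonal.antidiagonal i ×ˢ Finset.HasAntidiagonal.antidiagonal j,
      (((p.1.1 + p.2.1).choose p.1.1 * (p.1.2 + p.2.2).choose p.1.2 : ℕ) : T) *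
        (u (p.1.1 + p.2.1) * v (p.1.2 + p.2.2)) =
      ∑ q ∈ (Finset.HasAntidiagonal.antidiagonal (i + j) ×ˢ Finset.HasAntidiagonal.antidiagonal i).filter
        (fun q => q.2.1 ≤ q.1.1 ∧ q.2.2 ≤ q.1.2),
        ((q.1.1.choose q.2.1 * q.1.2.choose q.2.2 : ℕ) : T) * (u q.1.1 * v q.1.2) := by
    refine Finset.sum_nbij' (fun p => ((p.1.1 + p.2.1, p.1.2 + p.2.2), p.1))
      (fun q => (q.2, (q.1.1 - q.2.1, q.1.2 - q.2.2))) ?_ ?_ ?_ ?_ ?_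
    · rintro ⟨⟨a, b⟩, ⟨c, d⟩⟩ h
      simp only [Finset.mem_product, Finset.HasAntidiagonal.mem_antidiagonal, Finset.mem_filter] at h ⊢
      omega
    · rintro ⟨⟨e, f⟩, ⟨a, b⟩⟩ h
      simp only [Finset.mem_product, Finset.HasAntidiagonal.mem_antidiagonal, Finset.mem_filter] at h ⊢
      omega
    · rintro ⟨⟨a, b⟩, ⟨c, d⟩⟩ h
      simp only [Finset.mem_product, Finset.HasAntidiagonal.mem_antidiagonal] at h
      simp only [Prod.mk.injEq, true_and, and_true, eq_self_iff_true]
      omega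
    · rintro ⟨⟨e, f⟩, ⟨a, b⟩⟩ h
      simp only [Finset.mem_product, Finset.HasAntidiagonal.mem_antidiagonal, Finset.mem_filter] at h
      simp only [Prod.mk.injEq, true_and, and_true, eq_self_iff_true]
      omega
    · rintro ⟨⟨a, b⟩, ⟨c, d⟩⟩ h
      rfl
  rw [key]
  refine Finset.sum_subset (Finset.filter_subset _ _) fun q hq hq' => ?_
  simp only [Finset.mem_filter, hq, true_and, not_and_or, not_le] at hq'
  have h0 : q.1.1.choose q.2.1 * q.1.2.choose q.2.2 = 0 := by
    rcases hq' with h | h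
    · rw [Nat.choose_eq_zero_of_lt h, zero_mul]
    · rw [Nat.choose_eq_zero_of_lt h, mul_zero]
  rw [h0, Nat.cast_zero, zero_mul]

end Conv

section Gamma

lemma one_mem_gammaPow_zero : (1 : DPA R M) ∈ GammaPow R M 0 :=
  Submodule.subset_span ⟨0, Fin.elim0, Fin.elim0, by simp, by simp⟩

lemma gammaPow_mul_le (a b : ℕ) :
    GammaPow R M a * GammaPow R M b ≤ GammaPow R M (a + b) := by
  rw [GammaPow, GammaPow, Submodule.span_mul_span]
  refine Submodule.span_le.mpr ?_
  rintro _ ⟨x, ⟨k, ms, ns, hsum, rfl⟩, y, ⟨l, ms', ns', hsum', rfl⟩, rfl⟩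
  refine Submodule.subset_span
    ⟨k + l, Fin.append ms ms', Fin.append ns ns', ?_, ?_⟩
  · rw [Fin.sum_univ_add]
    simp [hsum, hsum']
  · rw [Fin.prod_univ_add]
    simp

lemma mul_mem_gammaPow {a b : ℕ} {x y : DPA R M} (hx : x ∈ GammaPow R M a)
    (hy : y ∈ GammaPow R M b) : x * y ∈ GammaPow R M (a + b) :=
  gammaPow_mul_le R M a b (Submodule.mul_mem_mul hx hy)

variable (N : Type u) [AddCommGroup N] [Module R N]

lemma dpaMap_gammaPow_le (f : M →ₗ[R] N) (i : ℕ) :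
    Submodule.map (dpaMap R M N f).toLinearMap (GammaPow R M i) ≤ GammaPow R N i := by
  rw [GammaPow, Submodule.map_span]
  refine Submodule.span_le.mpr ?_
  rintro _ ⟨x, ⟨k, ms, ns, hsum, rfl⟩, rfl⟩
  refine Submodule.subset_span ⟨k, fun i => f (ms i), ns, hsum, ?_⟩
  simp [map_prod, dpaMap_gamma]

end Gamma

section Main

variable (M' : Type u) [AddCommGroup M'] [Module R M']

lemma dpa_tmul_mul_tmul (a b : DPA R M) (c d : DPA R M') :
    a ⊗ₜ[R] c * b ⊗ₜ[R] d = (a * b) ⊗ₜ[R] (c * d) :=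
  @Algebra.TensorProduct.tmul_mul_tmul R (DPA R M) (DPA R M') _ _ Algebra.toModule _ _ _
    Algebra.toModule _ _ a b c d

lemma dpa_one_def : (1 : DPA R M ⊗[R] DPA R M') = (1 : DPA R M) ⊗ₜ[R] (1 : DPA R M') := rfl

/-- The target of `γ_n(m, m')` under the comparison map. -/
noncomputable def gTens (p : M × M') (n : ℕ) : DPA R M ⊗[R] DPA R M' :=
  ∑ ij ∈ Finset.HasAntidiagonal.antidiagonal n, dpGamma R M ij.1 p.1 ⊗ₜ[R] dpGamma R M' ij.2 p.2

lemma natCast_tmul_one (c : ℕ) :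
    ((c : DPA R M) ⊗ₜ[R] (1 : DPA R M')) = (c : DPA R M ⊗[R] DPA R M') := by
  induction c with
  | zero => simp
  | succ c ih =>
      rw [Nat.cast_succ, Nat.cast_succ, TensorProduct.add_tmul, ih,
        ← dpa_one_def]

lemma one_tmul_natCast (c : ℕ) :
    ((1 : DPA R M) ⊗ₜ[R] (c : DPA R M')) = (c : DPA R M ⊗[R] DPA R M') := by
  induction c with
  | zero => simp
  | succ c ih =>
      rw [Nat.cast_succ, Nat.cast_succ, TensorProduct.tmul_add, ih,
        ← dpa_one_def]

lemma gTens_zero (p : M × M') : gTens R M M' p 0 = 1 := by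
  simp [gTens, dpGamma_zero, dpa_one_def]

lemma gTens_smul (r : R) (p : M × M') (n : ℕ) :
    gTens R M M' (r • p) n = r ^ n • gTens R M M' p n := by
  unfold gTens
  rw [Finset.smul_sum]
  refine Finset.sum_congr rfl fun ij hij => ?_
  have hij' : ij.1 + ij.2 = n := Finset.HasAntidiagonal.mem_antidiagonal.mp hij
  rw [Prod.smul_fst, Prod.smul_snd, dpGamma_smul, dpGamma_smul, TensorProduct.tmul_smul,
    TensorProduct.smul_tmul', TensorProduct.smul_tmul', smul_smul, ← pow_add,
    show ij.2 + ij.1 = n by omega]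

lemma gTens_eq_conv (p : M × M') (n : ℕ) :
    gTens R M M' p n = ∑ ij ∈ Finset.HasAntidiagonal.antidiagonal n,
      (dpGamma R M ij.1 p.1 ⊗ₜ[R] (1 : DPA R M')) *
        ((1 : DPA R M) ⊗ₜ[R] dpGamma R M' ij.2 p.2) := by
  unfold gTens
  refine Finset.sum_congr rfl fun ij _ => ?_
  rw [dpa_tmul_mul_tmul, mul_one, one_mul]

lemma gTens_mul (p : M × M') (i j : ℕ) :
    gTens R M M' p i * gTens R M M' p j =
      ((i + j).choose i : DPA R M ⊗[R] DPA R M') * gTens R M M' p (i + j) := by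
  rw [gTens_eq_conv, gTens_eq_conv, gTens_eq_conv]
  refine conv_choose (u := fun a => dpGamma R M a p.1 ⊗ₜ[R] (1 : DPA R M'))
    (v := fun b => (1 : DPA R M) ⊗ₜ[R] dpGamma R M' b p.2) (fun a b => ?_) (fun a b => ?_) i j
  · rw [dpa_tmul_mul_tmul, mul_one, dpGamma_mul,
      ← natCast_tmul_one R M M' ((a + b).choose a), dpa_tmul_mul_tmul,
      mul_one]
  · rw [dpa_tmul_mul_tmul, mul_one, dpGamma_mul,
      ← one_tmul_natCast R M M' ((a + b).choose a), dpa_tmul_mul_tmul,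
      mul_one]

lemma gTens_add (p q : M × M') (n : ℕ) :
    gTens R M M' (p + q) n =
      ∑ ij ∈ Finset.HasAntidiagonal.antidiagonal n, gTens R M M' p ij.1 * gTens R M M' q ij.2 := by
  classical
  set T := DPA R M ⊗[R] DPA R M'
  let L : M → PowerSeries T := fun m => PowerSeries.mk fun i => dpGamma R M i m ⊗ₜ[R] 1
  let Rs : M' → PowerSeries T := fun m' =>
    PowerSeries.mk fun j => (1 : DPA R M) ⊗ₜ[R] dpGamma R M' j m'
  have hL : ∀ m₁ m₂ : M, L (m₁ + m₂) = L m₁ * L m₂ := by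
    intro m₁ m₂
    ext k
    rw [PowerSeries.coeff_mul]
    simp only [L, PowerSeries.coeff_mk]
    rw [dpGamma_add, TensorProduct.sum_tmul]
    refine Finset.sum_congr rfl fun ij _ => ?_
    rw [dpa_tmul_mul_tmul, mul_one]
  have hR : ∀ m₁ m₂ : M', Rs (m₁ + m₂) = Rs m₁ * Rs m₂ := by
    intro m₁ m₂
    ext k
    rw [PowerSeries.coeff_mul]
    simp only [Rs, PowerSeries.coeff_mk]
    rw [dpGamma_add, TensorProduct.tmul_sum]
    refine Finset.sum_congr rfl fun ij _ => ?_
    rw [dpa_tmul_mul_tmul, mul_one]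
  have hE : ∀ (w : M × M') (k : ℕ),
      gTens R M M' w k = PowerSeries.coeff (R := T) k (L w.1 * Rs w.2) := by
    intro w k
    rw [PowerSeries.coeff_mul, gTens_eq_conv]
    simp only [L, Rs, PowerSeries.coeff_mk]
  have main : L ((p + q).1) * Rs ((p + q).2) = (L p.1 * Rs p.2) * (L q.1 * Rs q.2) := by
    rw [Prod.fst_add, Prod.snd_add, hL, hR]
    ring
  rw [hE, main, PowerSeries.coeff_mul]
  refine Finset.sum_congr rfl fun ij _ => ?_
  rw [hE, hE]

/-- The comparison map `Γ(M × M') → Γ(M) ⊗ Γ(M')`. -/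
noncomputable def dpaProdToTensor : DPA R (M × M') →ₐ[R] DPA R M ⊗[R] DPA R M' :=
  dpaLift R (M × M') (gTens R M M') (gTens_zero R M M') (gTens_smul R M M')
    (gTens_add R M M') (gTens_mul R M M')

lemma dpaProdToTensor_gamma (n : ℕ) (p : M × M') :
    dpaProdToTensor R M M' (dpGamma R (M × M') n p) = gTens R M M' p n :=
  dpaLift_gamma _ _ _ _ _ _ _ _ _

/-- The comparison map `Γ(M) ⊗ Γ(M') → Γ(M × M')`. -/
noncomputable def tensorToDpaProd : DPA R M ⊗[R] DPA R M' →ₐ[R] DPA R (M × M') :=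
  Algebra.TensorProduct.productMap
    (dpaMap R M (M × M') (LinearMap.inl R M M'))
    (dpaMap R M' (M × M') (LinearMap.inr R M M'))

lemma tensorToDpaProd_gamma_tmul (x : DPA R M) (y : DPA R M') :
    tensorToDpaProd R M M' (x ⊗ₜ[R] y) =
      dpaMap R M (M × M') (LinearMap.inl R M M') x *
        dpaMap R M' (M × M') (LinearMap.inr R M M') y :=
  Algebra.TensorProduct.productMap_apply_tmul _ _ _ _

lemma comp_one :
    (dpaProdToTensor R M M').comp (tensorToDpaProd R M M') =
      AlgHom.id R (DPA R M ⊗[R] DPA R M') := by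
  refine Algebra.TensorProduct.ext ?_ ?_
  · refine dpa_algHom_ext R M fun n m => ?_
    simp only [AlgHom.coe_comp, Function.comp_apply, Algebra.TensorProduct.includeLeft_apply,
      AlgHom.coe_id, id_eq, AlgHom.restrictScalars_apply]
    rw [tensorToDpaProd_gamma_tmul, map_one, mul_one, dpaMap_gamma, dpaProdToTensor_gamma]
    unfold gTens
    rw [Finset.sum_eq_single (n, 0)]
    · simp [dpGamma_zero]
    · rintro ⟨i, j⟩ hij hne
      have h1 : i + j = n := Finset.HasAntidiagonal.mem_antidiagonal.mp hij
      have hj : j ≠ 0 := fun h => hne (by simp only [Prod.mk.injEq]; omega)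
      rw [show ((LinearMap.inl R M M') m).2 = (0 : M') from rfl, dpGamma_zero_arg R M' j hj,
        TensorProduct.tmul_zero]
    · intro h
      exact absurd (Finset.HasAntidiagonal.mem_antidiagonal.mpr (by omega)) h
  · refine dpa_algHom_ext R M' fun n m => ?_
    simp only [AlgHom.coe_comp, Function.comp_apply, Algebra.TensorProduct.includeRight_apply,
      AlgHom.coe_id, id_eq, AlgHom.restrictScalars_apply]
    rw [tensorToDpaProd_gamma_tmul, map_one, one_mul, dpaMap_gamma, dpaProdToTensor_gamma]
    unfold gTens
    rw [Finset.sum_eq_single (0, n)]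
    · simp [dpGamma_zero]
    · rintro ⟨i, j⟩ hij hne
      have h1 : i + j = n := Finset.HasAntidiagonal.mem_antidiagonal.mp hij
      have hi : i ≠ 0 := fun h => hne (by simp only [Prod.mk.injEq]; omega)
      rw [show ((LinearMap.inr R M M') m).1 = (0 : M) from rfl, dpGamma_zero_arg R M i hi,
        TensorProduct.zero_tmul]
    · intro h
      exact absurd (Finset.HasAntidiagonal.mem_antidiagonal.mpr (by omega)) h

lemma comp_two :
    (tensorToDpaProd R M M').comp (dpaProdToTensor R M M') =
      AlgHom.id R (DPA R (M × M')) := by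
  refine dpa_algHom_ext R (M × M') fun n p => ?_
  simp only [AlgHom.coe_comp, Function.comp_apply, AlgHom.coe_id, id_eq]
  rw [dpaProdToTensor_gamma]
  unfold gTens
  rw [map_sum]
  have : ∀ ij : ℕ × ℕ,
      tensorToDpaProd R M M' (dpGamma R M ij.1 p.1 ⊗ₜ[R] dpGamma R M' ij.2 p.2) =
        dpGamma R (M × M') ij.1 (p.1, 0) * dpGamma R (M × M') ij.2 (0, p.2) := by
    intro ij
    rw [tensorToDpaProd_gamma_tmul, dpaMap_gamma, dpaMap_gamma]
    rfl
  rw [Finset.sum_congr rfl fun ij _ => this ij, ← dpGamma_add]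
  congr 1
  ext <;> simp

/-- The comparison isomorphism. -/
noncomputable def dpaProdEquiv : DPA R (M × M') ≃ₐ[R] DPA R M ⊗[R] DPA R M' :=
  AlgEquiv.ofAlgHom (dpaProdToTensor R M M') (tensorToDpaProd R M M')
    (comp_one R M M') (comp_two R M M')

lemma dpaProdEquiv_gamma (n : ℕ) (p : M × M') :
    dpaProdEquiv R M M' (dpGamma R (M × M') n p) = gTens R M M' p n :=
  dpaProdToTensor_gamma R M M' n p

end Main

section Graded

variable (M' : Type u) [AddCommGroup M'] [Module R M']

/-- The image of `Γⁱ(M) ⊗ Γʲ(M')` in `Γ(M) ⊗ Γ(M')`. -/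
noncomputable def tdeg (i j : ℕ) : Submodule R (DPA R M ⊗[R] DPA R M') :=
  LinearMap.range
    (TensorProduct.map (GammaPow R M i).subtype (GammaPow R M' j).subtype)

/-- The degree `n` part of `Γ(M) ⊗ Γ(M')`. -/
noncomputable def sdeg (n : ℕ) : Submodule R (DPA R M ⊗[R] DPA R M') :=
  ⨆ i ∈ Finset.range (n + 1), tdeg R M M' i (n - i)

lemma tdeg_mul_le (i j k l : ℕ) :
    tdeg R M M' i j * tdeg R M M' k l ≤ tdeg R M M' (i + k) (j + l) := by
  unfold tdeg
  rw [TensorProduct.range_map_eq_span_tmul, TensorProduct.range_map_eq_span_tmul,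
    TensorProduct.range_map_eq_span_tmul, Submodule.span_mul_span]
  refine Submodule.span_le.mpr ?_
  rintro _ ⟨x, ⟨a, b, rfl⟩, y, ⟨c, d, rfl⟩, rfl⟩
  refine Submodule.subset_span
    ⟨⟨(a : DPA R M) * c, mul_mem_gammaPow R M a.2 c.2⟩,
     ⟨(b : DPA R M') * d, mul_mem_gammaPow R M' b.2 d.2⟩, ?_⟩
  simp [dpa_tmul_mul_tmul]

lemma sdeg_mul_le (a b : ℕ) :
    sdeg R M M' a * sdeg R M M' b ≤ sdeg R M M' (a + b) := by
  unfold sdeg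
  rw [Submodule.iSup_mul]
  refine iSup_le fun i => ?_
  rw [Submodule.iSup_mul]
  refine iSup_le fun hi => ?_
  rw [Submodule.mul_iSup]
  refine iSup_le fun j => ?_
  rw [Submodule.mul_iSup]
  refine iSup_le fun hj => ?_
  have hi' : i ≤ a := by have := Finset.mem_range.mp hi; omega
  have hj' : j ≤ b := by have := Finset.mem_range.mp hj; omega
  refine le_trans (tdeg_mul_le R M M' i (a - i) j (b - j)) ?_
  have heq : tdeg R M M' (i + j) (a - i + (b - j)) =
      tdeg R M M' (i + j) (a + b - (i + j)) := by
    congr 1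
    omega
  rw [heq]
  exact le_iSup₂ (f := fun t (_ : t ∈ Finset.range (a + b + 1)) =>
    tdeg R M M' t (a + b - t)) (i + j) (Finset.mem_range.mpr (by omega))

lemma gTens_mem_sdeg (p : M × M') (n : ℕ) : gTens R M M' p n ∈ sdeg R M M' n := by
  unfold gTens
  refine Submodule.sum_mem _ fun ij hij => ?_
  obtain ⟨i, j⟩ := ij
  have h := Finset.HasAntidiagonal.mem_antidiagonal.mp hij
  simp only at h
  have hj : j = n - i := by omega
  subst hj
  refine Submodule.mem_iSup_of_mem i (Submodule.mem_iSup_of_mem ?_ ?_)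
  · exact Finset.mem_range.mpr (by omega)
  · exact ⟨⟨dpGamma R M i p.1, dpGamma_mem R M i p.1⟩ ⊗ₜ[R]
      ⟨dpGamma R M' (n - i) p.2, dpGamma_mem R M' (n - i) p.2⟩, by simp⟩

lemma one_mem_sdeg_zero : (1 : DPA R M ⊗[R] DPA R M') ∈ sdeg R M M' 0 := by
  refine Submodule.mem_iSup_of_mem 0 (Submodule.mem_iSup_of_mem (by simp) ?_)
  exact ⟨⟨1, one_mem_gammaPow_zero R M⟩ ⊗ₜ[R] ⟨1, one_mem_gammaPow_zero R M'⟩,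
    by simp [dpa_one_def]⟩

lemma prod_gTens_mem (k : ℕ) (ps : Fin k → M × M') (ns : Fin k → ℕ) :
    (∏ i, gTens R M M' (ps i) (ns i)) ∈ sdeg R M M' (∑ i, ns i) := by
  induction k with
  | zero => simpa using one_mem_sdeg_zero R M M'
  | succ k ih =>
      rw [Fin.prod_univ_succ, Fin.sum_univ_succ]
      exact sdeg_mul_le R M M' _ _
        (Submodule.mul_mem_mul (gTens_mem_sdeg R M M' _ _) (ih _ _))

end Graded

/-- `Γ(M ⊕ M') ≅ Γ(M) ⊗ Γ(M')` as (graded) `R`-algebras: there is an `R`-algebra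
isomorphism sending `γ_n(m, m')` to `∑_{i+j=n} γ_i(m) ⊗ γ_j(m')`, and carrying
`Γⁿ(M ⊕ M')` onto `⊕_{i+j=n} Γⁱ(M) ⊗ Γʲ(M')`. -/
theorem dpa_prod_iso_tensor (M' : Type u) [AddCommGroup M'] [Module R M'] :
    ∃ e : DPA R (M × M') ≃ₐ[R] (DPA R M ⊗[R] DPA R M'),
      (∀ (n : ℕ) (m : M) (m' : M'),
        e (dpGamma R (M × M') n (m, m')) =
          ∑ i ∈ Finset.range (n + 1), dpGamma R M i m ⊗ₜ[R] dpGamma R M' (n - i) m') ∧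
      ∀ n : ℕ,
        Submodule.map (e.toLinearMap) (GammaPow R (M × M') n) =
          ⨆ i ∈ Finset.range (n + 1),
            LinearMap.range
              (TensorProduct.map (GammaPow R M i).subtype (GammaPow R M' (n - i)).subtype) := by
  refine ⟨dpaProdEquiv R M M', fun n m m' => ?_, fun n => ?_⟩
  · rw [dpaProdEquiv_gamma]
    unfold gTens
    rw [Finset.Nat.sum_antidiagonal_eq_sum_range_succ_mk]
  · show Submodule.map (dpaProdEquiv R M M').toLinearMap (GammaPow R (M × M') n) =
      sdeg R M M' n
    apply le_antisymm
    · rw [GammaPow, Submodule.map_span]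
      refine Submodule.span_le.mpr ?_
      rintro _ ⟨x, ⟨k, ps, ns, rfl, rfl⟩, rfl⟩
      rw [AlgEquiv.toLinearMap_apply, map_prod]
      rw [Finset.prod_congr rfl fun i _ => dpaProdEquiv_gamma R M M' (ns i) (ps i)]
      exact prod_gTens_mem R M M' k ps ns
    · refine iSup_le fun i => iSup_le fun hi => ?_
      have hi' : i ≤ n := by have := Finset.mem_range.mp hi; omega
      show tdeg R M M' i (n - i) ≤ _
      unfold tdeg
      rw [TensorProduct.range_map_eq_span_tmul]
      refine Submodule.span_le.mpr ?_
      rintro _ ⟨a, b, rfl⟩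
      refine Submodule.mem_map.mpr
        ⟨tensorToDpaProd R M M' ((a : DPA R M) ⊗ₜ[R] (b : DPA R M')), ?_, ?_⟩
      · rw [tensorToDpaProd_gamma_tmul]
        have h1 : dpaMap R M (M × M') (LinearMap.inl R M M') a ∈ GammaPow R (M × M') i :=
          dpaMap_gammaPow_le R M (M × M') (LinearMap.inl R M M') i ⟨a, a.2, rfl⟩
        have h2 : dpaMap R M' (M × M') (LinearMap.inr R M M') b ∈
            GammaPow R (M × M') (n - i) :=
          dpaMap_gammaPow_le R M' (M × M') (LinearMap.inr R M M') (n - i) ⟨b, b.2, rfl⟩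
        have := mul_mem_gammaPow R (M × M') h1 h2
        rwa [Nat.add_sub_cancel' hi'] at this
      · rw [AlgEquiv.toLinearMap_apply]
        exact AlgHom.congr_fun (comp_one R M M') _
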